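/- Let R be a ring and V a cochain complex of R-modules equipped with an increasing filtration by subcomplexes 0 = F₀V ⊆ F₁V ⊆ F₂V ⊆ ⋯ which is exhaustive (V = ⋃_i F_iV). Assume that for each i ≥ 1 the quotient complex Gr_iV = F_iV/F_{i-1}V is K-projective, and that for each i the inclusion F_{i-1}V ⊆ F_iV splits in every degree, i.e. F_iV ≅ F_{i-1}V ⊕ Gr_iV as graded R-modules. Then V is K-projective. -/

import Mathlib

open CategoryTheory Limits

/-- A cochain complex of `R`-modules is K-projective if every morphism from it to an
acyclic complex is homotopic to zero. -/
def KProjective {R : Type*} [Ring R] (P : CochainComplex (ModuleCat R) ℤ) : Prop :=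
  ∀ Z : CochainComplex (ModuleCat R) ℤ, (∀ i : ℤ, Z.ExactAt i) →
    ∀ f : P ⟶ Z, Nonempty (Homotopy f 0)

/-- Theorem 1.3: a cochain complex with an exhaustive increasing filtration
`0 = F₀V ⊆ F₁V ⊆ ⋯` by subcomplexes, which splits degreewise and whose graded pieces
`Gr_iV = F_iV/F_{i-1}V` are K-projective, is itself K-projective. -/
theorem K_projective_of_filtration {R : Type*} [Ring R]
    (V : CochainComplex (ModuleCat R) ℤ)
    -- the filtration, given as a chain of subcomplexes of `V`:
    (F : ℕ → CochainComplex (ModuleCat R) ℤ)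
    (ι : ∀ i : ℕ, F i ⟶ F (i + 1))
    (j : ∀ i : ℕ, F i ⟶ V)
    (hcomm : ∀ i : ℕ, ι i ≫ j (i + 1) = j i)
    (hmono : ∀ i : ℕ, Mono (j i))
    -- `F₀V = 0`:
    (hzero : IsZero (F 0))
    -- the filtration is exhaustive:
    (hexh : ∀ k : ℤ, (⨆ i : ℕ, LinearMap.range ((j i).f k).hom) = ⊤)
    -- the inclusions split in every degree (as graded modules `F_{i+1}V ≅ F_iV ⊕ Gr_{i+1}V`):
    (hsplit : ∀ (i : ℕ) (k : ℤ), ∃ r : (F (i + 1)).X k ⟶ (F i).X k, (ι i).f k ≫ r = 𝟙 ((F i).X k))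
    -- the graded pieces `Gr_{i+1}V = F_{i+1}V / F_iV` are K-projective:
    (hGr : ∀ i : ℕ, KProjective (cokernel (ι i))) :
    KProjective V := by
  intro Z hZ f
  have rel1 : ∀ a : ℤ, (ComplexShape.up ℤ).Rel a (a + 1) := fun a => rfl
  have rel2 : ∀ a : ℤ, (ComplexShape.up ℤ).Rel (a - 1) a := fun a => by
    simp [ComplexShape.up_Rel]
  -- `F 0` is zero in each degree
  have hzeroX : ∀ k : ℤ, IsZero ((F 0).X k) := fun k => by
    rw [IsZero.iff_id_eq_zero]
    have h0 : (𝟙 (F 0) : F 0 ⟶ F 0) = 0 := hzero.eq_of_src _ _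
    calc 𝟙 ((F 0).X k) = (𝟙 (F 0) : F 0 ⟶ F 0).f k := rfl
      _ = (0 : F 0 ⟶ F 0).f k := by rw [h0]
      _ = 0 := rfl
  -- base homotopy on `F 0`
  have H0 : Homotopy (j 0 ≫ f) 0 := by
    refine ⟨fun _ _ => 0, fun _ _ _ => rfl, fun a => ?_⟩
    have h1 : (j 0 ≫ f).f a = 0 := (hzeroX a).eq_of_src _ _
    simp [h1, dNext, prevD]
  -- inductive step
  have stepex : ∀ (i : ℕ) (Hi : Homotopy (j i ≫ f) 0),
      ∃ H' : Homotopy (j (i + 1) ≫ f) 0,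
        ∀ a b : ℤ, (ι i).f a ≫ H'.hom a b = Hi.hom a b := by
    intro i Hi
    choose r hr using hsplit i
    set s : ∀ a b : ℤ, (F (i + 1)).X a ⟶ Z.X b := fun a b => r a ≫ Hi.hom a b with hs
    have h3 : ∀ a : ℤ, (ι i).f a ≫ dNext a s = dNext a Hi.hom := by
      intro a
      rw [dNext_eq s (rel1 a), dNext_eq Hi.hom (rel1 a), hs]
      dsimp only
      slice_lhs 1 2 => rw [(ι i).comm a (a + 1)]
      slice_lhs 2 3 => rw [hr]
      simp
    have h4 : ∀ a : ℤ, (ι i).f a ≫ prevD a s = prevD a Hi.hom := by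
      intro a
      rw [prevD_eq s (rel2 a), prevD_eq Hi.hom (rel2 a), hs]
      dsimp only
      slice_lhs 1 2 => rw [hr]
      simp
    have hg0 : ι i ≫ (j (i + 1) ≫ f - Homotopy.nullHomotopicMap s) = 0 := by
      apply HomologicalComplex.hom_ext
      intro a
      have h1 : (ι i).f a ≫ (j (i + 1)).f a = (j i).f a := by
        rw [← HomologicalComplex.comp_f, hcomm]
      have h2 : (Homotopy.nullHomotopicMap s).f a = dNext a s + prevD a s := rfl
      have h5 := Hi.comm a
      simp only [HomologicalComplex.zero_f_apply, add_zero] at h5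
      rw [HomologicalComplex.comp_f, HomologicalComplex.sub_f_apply, h2,
        Preadditive.comp_sub, Preadditive.comp_add, h3, h4,
        HomologicalComplex.comp_f, ← Category.assoc, h1,
        ← HomologicalComplex.comp_f, h5, HomologicalComplex.zero_f_apply]
      abel
    set g' : cokernel (ι i) ⟶ Z := cokernel.desc (ι i) (j (i + 1) ≫ f - Homotopy.nullHomotopicMap s) hg0 with hg'
    obtain ⟨Ht⟩ := hGr i Z hZ g'
    have hπ : ∀ a : ℤ, (ι i).f a ≫ (cokernel.π (ι i)).f a = 0 := fun a => by
      rw [← HomologicalComplex.comp_f, cokernel.condition]; rfl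
    have hπg : ∀ a : ℤ, (cokernel.π (ι i)).f a ≫ g'.f a =
        (j (i + 1) ≫ f).f a -
          ((F (i + 1)).d a (a + 1) ≫ s (a + 1) a + s a (a - 1) ≫ Z.d (a - 1) a) := fun a => by
      rw [← HomologicalComplex.comp_f, hg', cokernel.π_desc, HomologicalComplex.sub_f_apply]
      congr 1
      rw [show (Homotopy.nullHomotopicMap s).f a = dNext a s + prevD a s from rfl,
        dNext_eq s (rel1 a), prevD_eq s (rel2 a)]
    refine ⟨⟨fun a b => s a b + (cokernel.π (ι i)).f a ≫ Ht.hom a b, ?_, ?_⟩, ?_⟩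
    · intro a b hab
      rw [hs]
      dsimp only
      rw [Hi.zero a b hab, Ht.zero a b hab, comp_zero, comp_zero, add_zero]
    · intro a
      have hTt := Ht.comm a
      simp only [HomologicalComplex.zero_f_apply, add_zero] at hTt
      rw [dNext_eq _ (rel1 a), prevD_eq _ (rel2 a)] at hTt
      have key := hπg a
      rw [hTt] at key
      simp only [Preadditive.comp_add, ← Category.assoc] at key
      rw [(cokernel.π (ι i)).comm a (a + 1)] at key
      simp only [Category.assoc] at key
      rw [eq_sub_iff_add_eq] at key
      rw [dNext_eq _ (rel1 a), prevD_eq _ (rel2 a)]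
      simp only [HomologicalComplex.zero_f_apply, add_zero, Preadditive.comp_add,
        Preadditive.add_comp, Category.assoc]
      rw [← key]
      abel
    · intro a b
      rw [Preadditive.comp_add, hs]
      dsimp only
      rw [← Category.assoc, ← Category.assoc, hr, Category.id_comp, hπ, zero_comp, add_zero]
  -- the sequence of homotopies
  choose step hstep using stepex
  let H : ∀ i : ℕ, Homotopy (j i ≫ f) 0 := fun i => Nat.rec H0 step i
  have hcompat : ∀ (i : ℕ) (a b : ℤ), (ι i).f a ≫ (H (i + 1)).hom a b = (H i).hom a b :=
    fun i => hstep i (H i)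
  -- transition maps of the filtration
  let ψ : ∀ (i i' : ℕ), i ≤ i' → (F i ⟶ F i') := fun i i' h =>
    Nat.leRecOn h (fun {k} φ => φ ≫ ι k) (𝟙 (F i))
  have hψsucc : ∀ (i i' : ℕ) (h : i ≤ i') (h' : i ≤ i' + 1),
      ψ i (i' + 1) h' = ψ i i' h ≫ ι i' := fun i i' h h' =>
    Nat.leRecOn_succ h _
  have hψself : ∀ i : ℕ, ψ i i le_rfl = 𝟙 (F i) := fun i => Nat.leRecOn_self _
  have hψj : ∀ (i i' : ℕ) (h : i ≤ i'), ψ i i' h ≫ j i' = j i := by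
    intro i i' h
    induction i', h using Nat.le_induction with
    | base => rw [hψself, Category.id_comp]
    | succ i' h ih => rw [hψsucc i i' h, Category.assoc, hcomm, ih]
  have hψH : ∀ (i i' : ℕ) (h : i ≤ i') (a b : ℤ),
      (ψ i i' h).f a ≫ (H i').hom a b = (H i).hom a b := by
    intro i i' h
    induction i', h using Nat.le_induction with
    | base => intro a b; rw [hψself]; simp
    | succ i' h ih =>
      intro a b
      rw [hψsucc i i' h, HomologicalComplex.comp_f, Category.assoc, hcompat, ih]
  -- injectivity
  have hinj : ∀ (i : ℕ) (a : ℤ), Function.Injective ((j i).f a) := by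
    intro i a
    haveI := hmono i
    exact (ModuleCat.mono_iff_injective _).mp inferInstance
  -- pointwise versions
  have hjψ : ∀ (a : ℤ) (i i' : ℕ) (h : i ≤ i') (y : (F i).X a),
      (j i').f a ((ψ i i' h).f a y) = (j i).f a y := by
    intro a i i' h y
    have := congrArg (fun φ : F i ⟶ V => φ.f a y) (hψj i i' h)
    simpa using this
  have hHψ : ∀ (a b : ℤ) (i i' : ℕ) (h : i ≤ i') (y : (F i).X a),
      (H i').hom a b ((ψ i i' h).f a y) = (H i).hom a b y := by
    intro a b i i' h y
    have := congrArg (fun φ : (F i).X a ⟶ Z.X b => φ y) (hψH i i' h a b)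
    simpa using this
  -- key independence lemma
  have haux : ∀ (a b : ℤ) (i i' : ℕ), i ≤ i' → ∀ (y : (F i).X a) (y' : (F i').X a),
      (j i).f a y = (j i').f a y' → (H i).hom a b y = (H i').hom a b y' := by
    intro a b i i' h y y' hyy
    have h1 : (j i').f a ((ψ i i' h).f a y) = (j i').f a y' := by
      rw [hjψ a i i' h y, hyy]
    rw [← hinj i' a h1, hHψ a b i i' h y]
  have hkey : ∀ (a b : ℤ) (i i' : ℕ) (y : (F i).X a) (y' : (F i').X a),
      (j i).f a y = (j i').f a y' → (H i).hom a b y = (H i').hom a b y' := by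
    intro a b i i' y y' hyy
    rcases le_total i i' with h | h
    · exact haux a b i i' h y y' hyy
    · exact (haux a b i' i h y' y hyy.symm).symm
  -- exhaustivity: every element comes from some stage
  have hx : ∀ (a : ℤ) (x : V.X a), ∃ (i : ℕ) (y : (F i).X a), (j i).f a y = x := by
    intro a x
    have hmonot : Monotone fun i : ℕ => LinearMap.range ((j i).f a).hom := by
      intro i i' h
      rintro z ⟨y, rfl⟩
      exact ⟨(ψ i i' h).f a y, hjψ a i i' h y⟩
    have hmem : x ∈ ⨆ i : ℕ, LinearMap.range ((j i).f a).hom := by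
      rw [hexh a]; trivial
    rw [Submodule.mem_iSup_of_directed _ hmonot.directed_le] at hmem
    obtain ⟨i, y, hy⟩ := hmem
    exact ⟨i, y, hy⟩
  choose idx elt helt using hx
  -- the glued homotopy components
  have homex : ∀ a b : ℤ, ∃ hom : V.X a ⟶ Z.X b,
      ∀ (i : ℕ) (y : (F i).X a), hom ((j i).f a y) = (H i).hom a b y := by
    intro a b
    refine ⟨ModuleCat.ofHom ⟨⟨fun x => (H (idx a x)).hom a b (elt a x), ?_⟩, ?_⟩, ?_⟩
    · intro x₁ x₂
      dsimp only
      set m := max (idx a x₁) (idx a x₂) with hm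
      set y₁ := (ψ (idx a x₁) m (le_max_left _ _)).f a (elt a x₁) with hy₁
      set y₂ := (ψ (idx a x₂) m (le_max_right _ _)).f a (elt a x₂) with hy₂
      have e₁ : (j m).f a y₁ = x₁ := by rw [hy₁, hjψ, helt]
      have e₂ : (j m).f a y₂ = x₂ := by rw [hy₂, hjψ, helt]
      have e₁₂ : (j (idx a (x₁ + x₂))).f a (elt a (x₁ + x₂)) = (j m).f a (y₁ + y₂) := by
        rw [map_add, e₁, e₂, helt]
      rw [hkey a b _ m _ _ e₁₂, map_add,
        hkey a b (idx a x₁) m (elt a x₁) y₁ (by rw [helt, e₁]),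
        hkey a b (idx a x₂) m (elt a x₂) y₂ (by rw [helt, e₂])]
    · intro c x
      dsimp only
      have e : (j (idx a (c • x))).f a (elt a (c • x)) =
          (j (idx a x)).f a (c • elt a x) := by
        rw [map_smul, helt, helt]
      rw [hkey a b _ _ _ _ e, map_smul]
      rfl
    · intro i y
      dsimp only
      exact hkey a b _ i _ y (helt a _)
  choose hom hhom using homex
  -- assemble the homotopy on `V`
  refine ⟨⟨hom, ?_, ?_⟩⟩
  · intro a b hab
    ext x
    have : hom a b ((j (idx a x)).f a (elt a x)) = (H (idx a x)).hom a b (elt a x) :=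
      hhom a b _ _
    rw [helt] at this
    rw [this, (H (idx a x)).zero a b hab]
    rfl
  · intro a
    rw [dNext_eq hom (rel1 a), prevD_eq hom (rel2 a)]
    ext x
    obtain ⟨i, y, hy⟩ : ∃ (i : ℕ) (y : (F i).X a), (j i).f a y = x :=
      ⟨idx a x, elt a x, helt a x⟩
    have hdy : V.d a (a + 1) x = (j i).f (a + 1) ((F i).d a (a + 1) y) := by
      rw [← hy]
      exact congrArg (fun φ : (F i).X a ⟶ V.X (a + 1) => φ y) ((j i).comm a (a + 1))
    have hc := (H i).comm a
    rw [dNext_eq _ (rel1 a), prevD_eq _ (rel2 a)] at hc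
    have hcy := congrArg (fun φ : (F i).X a ⟶ Z.X a => φ y) hc
    beta_reduce at hcy
    have hfx : f.f a x = (j i ≫ f).f a y := by
      rw [← hy]; rfl
    have t1 : (V.d a (a + 1) ≫ hom (a + 1) a) x =
        (H i).hom (a + 1) a ((F i).d a (a + 1) y) := by
      show hom (a + 1) a (V.d a (a + 1) x) = _
      rw [hdy, hhom]
    have t2 : (hom a (a - 1) ≫ Z.d (a - 1) a) x =
        Z.d (a - 1) a ((H i).hom a (a - 1) y) := by
      show Z.d (a - 1) a (hom a (a - 1) x) = _
      rw [← hy, hhom]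
    have hrhs : (V.d a (a + 1) ≫ hom (a + 1) a + hom a (a - 1) ≫ Z.d (a - 1) a +
        (0 : V ⟶ Z).f a) x =
        (V.d a (a + 1) ≫ hom (a + 1) a) x + (hom a (a - 1) ≫ Z.d (a - 1) a) x := by
      rw [HomologicalComplex.zero_f_apply, add_zero]
      rfl
    rw [hrhs, t1, t2, hfx, hcy]
    rw [HomologicalComplex.zero_f_apply, add_zero]
    rfl
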